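/- Let C̄₁, …, C̄₆ be the six closed trapezoid pairs of the frequency ring, and for S ⊂ ℝ² let per(S) = ⋃_{k∈ℤ²}(S + 2πk). Then: (a) for each j ∈ {1,…,6}, ∑_{λ∈Λ} 𝟙_{per(C̄_j)}(ξ − λ) = 1 for Lebesgue-almost every ξ ∈ ℝ², i.e. the eight Λ-translates of C̄_j tile the plane 2π-periodically up to a null set; and (b) ∑_{γ∈Γ} 𝟙_{per([−π/2,π/2]²)}(ξ − γ) = 1 for almost every ξ ∈ ℝ². -/

import Mathlib

open scoped Real
open MeasureTheory

/-- The closed frequency ring `R = [−π,π]² \ (−π/2,π/2)²`. -/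
def freqRing : Set (Fin 2 → ℝ) :=
  {ξ | (|ξ 0| ≤ π ∧ |ξ 1| ≤ π) ∧ (π / 2 ≤ |ξ 0| ∨ π / 2 ≤ |ξ 1|)}

/-- `C̄₀ = [−π/2,π/2]²` and the six closed trapezoid pairs `C̄₁, …, C̄₆` of the
frequency ring, cut by the lines through the origin of slopes `±1, ±3, ±1/3`. -/
def trapPair : Fin 7 → Set (Fin 2 → ℝ) :=
  ![{ξ | |ξ 0| ≤ π / 2 ∧ |ξ 1| ≤ π / 2},
    {ξ ∈ freqRing | |ξ 1| ≤ |ξ 0| ∧ |ξ 0| ≤ 3 * |ξ 1| ∧ ξ 0 * ξ 1 ≤ 0},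
    {ξ ∈ freqRing | 3 * |ξ 1| ≤ |ξ 0|},
    {ξ ∈ freqRing | |ξ 1| ≤ |ξ 0| ∧ |ξ 0| ≤ 3 * |ξ 1| ∧ 0 ≤ ξ 0 * ξ 1},
    {ξ ∈ freqRing | |ξ 0| ≤ |ξ 1| ∧ |ξ 1| ≤ 3 * |ξ 0| ∧ ξ 0 * ξ 1 ≤ 0},
    {ξ ∈ freqRing | 3 * |ξ 0| ≤ |ξ 1|},
    {ξ ∈ freqRing | |ξ 0| ≤ |ξ 1| ∧ |ξ 1| ≤ 3 * |ξ 0| ∧ 0 ≤ ξ 0 * ξ 1}]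

/-- The `2π`-periodization `per(S) = ⋃_{k∈ℤ²} (S + 2πk)`. -/
def periodize (S : Set (Fin 2 → ℝ)) : Set (Fin 2 → ℝ) :=
  {ξ | ∃ k : Fin 2 → ℤ, (ξ - fun i => 2 * π * (k i : ℝ)) ∈ S}

lemma null_line (α β c : ℝ) (h : α ≠ 0 ∨ β ≠ 0) :
    volume {ξ : Fin 2 → ℝ | α * ξ 0 + β * ξ 1 = c} = 0 := by
  set f : (Fin 2 → ℝ) →ₗ[ℝ] ℝ :=
    { toFun := fun ξ => α * ξ 0 + β * ξ 1
      map_add' := by intro x y; simp [Pi.add_apply]; ring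
      map_smul' := by intro m x; simp [Pi.smul_apply, smul_eq_mul]; ring } with hf
  rcases Set.eq_empty_or_nonempty {ξ : Fin 2 → ℝ | α * ξ 0 + β * ξ 1 = c} with he | ⟨x0, hx0⟩
  · simp [he]
  · have hker : LinearMap.ker f ≠ ⊤ := by
      intro htop
      have h0 : ∀ ξ, f ξ = 0 := fun ξ => by
        have : ξ ∈ LinearMap.ker f := by rw [htop]; trivial
        simpa using this
      rcases h with hα | hβ
      · have := h0 (fun i => if i = 0 then 1 else 0)
        simp [hf] at this; exact hα this
      · have := h0 (fun i => if i = 0 then 0 else 1)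
        simp [hf] at this; exact hβ this
    have hx0' : α * x0 0 + β * x0 1 = c := hx0
    have hset : {ξ : Fin 2 → ℝ | α * ξ 0 + β * ξ 1 = c}
        = (fun ξ => ξ + (-x0)) ⁻¹' (LinearMap.ker f : Set (Fin 2 → ℝ)) := by
      ext ξ
      simp only [Set.mem_setOf_eq, Set.mem_preimage, SetLike.mem_coe, LinearMap.mem_ker, hf,
        LinearMap.coe_mk, AddHom.coe_mk, Pi.add_apply, Pi.neg_apply]
      constructor
      · intro hc; linarith
      · intro hc; linarith
    rw [hset, measure_preimage_add_right]
    exact Measure.addHaar_submodule volume _ hker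


def GoodPt (a b : ℝ) : Prop :=
  ∀ k : ℤ, a ≠ k ∧ b ≠ k ∧ a + b ≠ k ∧ a - b ≠ k ∧ a + 3*b ≠ k ∧ a - 3*b ≠ k
    ∧ 3*a + b ≠ k ∧ 3*a - b ≠ k

/-- Normalized ring condition. -/
def NR (x y : ℝ) : Prop := |x| ≤ 2 ∧ |y| ≤ 2 ∧ (1 ≤ |x| ∨ 1 ≤ |y|)

def N1 (x y : ℝ) : Prop := NR x y ∧ |y| ≤ |x| ∧ |x| ≤ 3*|y| ∧ x*y ≤ 0
def N2 (x y : ℝ) : Prop := NR x y ∧ 3*|y| ≤ |x|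
def N3 (x y : ℝ) : Prop := NR x y ∧ |y| ≤ |x| ∧ |x| ≤ 3*|y| ∧ 0 ≤ x*y

def S1 (x y : ℝ) : Prop := 1 < x ∧ x < 2 ∧ -x < y ∧ 3*y < -x
def S2 (x y : ℝ) : Prop := 1 < x ∧ x < 2 ∧ -x < 3*y ∧ 3*y < x

lemma goodpt_shift {a b : ℝ} (hg : GoodPt a b) (p q : ℤ) : GoodPt (a - p) (b - q) := by
  intro k
  obtain ⟨h1, _, _, _, _, _, _, _⟩ := hg (k + p)
  obtain ⟨_, h2, _, _, _, _, _, _⟩ := hg (k + q)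
  obtain ⟨_, _, h3, _, _, _, _, _⟩ := hg (k + p + q)
  obtain ⟨_, _, _, h4, _, _, _, _⟩ := hg (k + p - q)
  obtain ⟨_, _, _, _, h5, _, _, _⟩ := hg (k + p + 3*q)
  obtain ⟨_, _, _, _, _, h6, _, _⟩ := hg (k + p - 3*q)
  obtain ⟨_, _, _, _, _, _, h7, _⟩ := hg (k + 3*p + q)
  obtain ⟨_, _, _, _, _, _, _, h8⟩ := hg (k + 3*p - q)
  push_cast at h1 h2 h3 h4 h5 h6 h7 h8
  refine ⟨?_, ?_, ?_, ?_, ?_, ?_, ?_, ?_⟩ <;> intro h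
  · exact h1 (by linarith)
  · exact h2 (by linarith)
  · exact h3 (by linarith)
  · exact h4 (by linarith)
  · exact h5 (by linarith)
  · exact h6 (by linarith)
  · exact h7 (by linarith)
  · exact h8 (by linarith)

lemma goodpt_neg {a b : ℝ} (hg : GoodPt a b) : GoodPt a (-b) := by
  intro k
  obtain ⟨h1, h2, h3, h4, h5, h6, h7, h8⟩ := hg k
  obtain ⟨g1, g2, g3, g4, g5, g6, g7, g8⟩ := hg (-k)
  have hc : ((-k : ℤ) : ℝ) = -(k : ℝ) := by push_cast; ring
  rw [hc] at g1 g2 g3 g4 g5 g6 g7 g8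
  refine ⟨h1, ?_, ?_, ?_, ?_, ?_, ?_, ?_⟩ <;> intro h
  · exact g2 (by linarith)
  · exact h4 (by linarith)
  · exact h3 (by linarith)
  · exact h6 (by linarith)
  · exact h5 (by linarith)
  · exact h8 (by linarith)
  · exact h7 (by linarith)

lemma goodpt_swap {a b : ℝ} (hg : GoodPt a b) : GoodPt b a := by
  intro k
  obtain ⟨h1, h2, h3, h4, h5, h6, h7, h8⟩ := hg k
  obtain ⟨g1, g2, g3, g4, g5, g6, g7, g8⟩ := hg (-k)
  have hc : ((-k : ℤ) : ℝ) = -(k : ℝ) := by push_cast; ring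
  rw [hc] at g1 g2 g3 g4 g5 g6 g7 g8
  refine ⟨h2, h1, ?_, ?_, ?_, ?_, ?_, ?_⟩ <;> intro h
  · exact h3 (by linarith)
  · exact g4 (by linarith)
  · exact h7 (by linarith)
  · exact g8 (by linarith)
  · exact h5 (by linarith)
  · exact g6 (by linarith)

section strictify
variable {x y : ℝ}

lemma goodpt_facts (hg : GoodPt x y) :
    x ≠ 0 ∧ y ≠ 0 ∧ x ≠ 1 ∧ x ≠ -1 ∧ x ≠ 2 ∧ x ≠ -2 ∧ y ≠ 1 ∧ y ≠ -1 ∧ y ≠ 2 ∧ y ≠ -2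
      ∧ x + y ≠ 0 ∧ x - y ≠ 0 ∧ x + 3*y ≠ 0 ∧ x - 3*y ≠ 0 ∧ 3*x + y ≠ 0 ∧ 3*x - y ≠ 0 := by
  have h0 := hg 0
  have h1 := hg 1
  have hm1 := hg (-1)
  have h2 := hg 2
  have hm2 := hg (-2)
  push_cast at h0 h1 hm1 h2 hm2
  exact ⟨by tauto, by tauto, by tauto, by tauto, by tauto, by tauto, by tauto, by tauto,
    by tauto, by tauto, by tauto, by tauto, by tauto, by tauto, by tauto, by tauto⟩

lemma n1_iff (hg : GoodPt x y) : N1 x y ↔ S1 x y ∨ S1 (-x) (-y) := by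
  obtain ⟨hx0, hy0, hx1, hxm1, hx2, hxm2, hy1, hym1, hy2, hym2,
    hpy, hmy, hp3, hm3, h3p, h3m⟩ := goodpt_facts hg
  unfold N1 NR S1
  rcases lt_or_gt_of_ne hx0 with hx | hx <;> rcases lt_or_gt_of_ne hy0 with hy | hy
  · -- x < 0, y < 0 : both sides false
    rw [abs_of_neg hx, abs_of_neg hy]
    constructor
    · rintro ⟨-, -, -, h⟩; exfalso; nlinarith
    · rintro (⟨h1, h2, h3, h4⟩ | ⟨h1, h2, h3, h4⟩) <;> exfalso <;> linarith
  · -- x < 0, y > 0 : second branch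
    rw [abs_of_neg hx, abs_of_pos hy]
    constructor
    · rintro ⟨⟨u1, u2, u3⟩, u4, u5, -⟩
      right
      have hxge : 1 ≤ -x := by rcases u3 with h | h; exact h; linarith
      refine ⟨lt_of_le_of_ne hxge ?_, lt_of_le_of_ne u1 ?_, ?_, ?_⟩
      · intro h; exact hxm1 (by linarith)
      · intro h; exact hxm2 (by linarith)
      · rcases (show x ≤ -y by linarith).lt_or_eq with h | h
        · linarith
        · exact absurd (by linarith : x + y = 0) hpy
      · rcases (show -x ≤ 3*y by linarith).lt_or_eq with h | h
        · linarith
        · exact absurd (by linarith : x + 3*y = 0) hp3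
    · rintro (⟨h1, h2, h3, h4⟩ | ⟨h1, h2, h3, h4⟩)
      · exfalso; linarith
      · exact ⟨⟨by linarith, by linarith, Or.inl (by linarith)⟩, by linarith, by linarith,
          by nlinarith⟩
  · -- x > 0, y < 0 : first branch
    rw [abs_of_pos hx, abs_of_neg hy]
    constructor
    · rintro ⟨⟨u1, u2, u3⟩, u4, u5, -⟩
      left
      have hxge : 1 ≤ x := by rcases u3 with h | h; exact h; linarith
      refine ⟨lt_of_le_of_ne hxge (Ne.symm hx1), lt_of_le_of_ne u1 hx2, ?_, ?_⟩
      · rcases (show -x ≤ y by linarith).lt_or_eq with h | h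
        · linarith
        · exact absurd (by linarith : x + y = 0) hpy
      · rcases (show 3*y ≤ -x by linarith).lt_or_eq with h | h
        · linarith
        · exact absurd (by linarith : x + 3*y = 0) hp3
    · rintro (⟨h1, h2, h3, h4⟩ | ⟨h1, h2, h3, h4⟩)
      · exact ⟨⟨by linarith, by linarith, Or.inl (by linarith)⟩, by linarith, by linarith,
          by nlinarith⟩
      · exfalso; linarith
  · -- x > 0, y > 0 : both sides false
    rw [abs_of_pos hx, abs_of_pos hy]
    constructor
    · rintro ⟨-, -, -, h⟩; exfalso; nlinarith
    · rintro (⟨h1, h2, h3, h4⟩ | ⟨h1, h2, h3, h4⟩) <;> exfalso <;> linarith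

lemma n2_iff (hg : GoodPt x y) : N2 x y ↔ S2 x y ∨ S2 (-x) (-y) := by
  obtain ⟨hx0, hy0, hx1, hxm1, hx2, hxm2, hy1, hym1, hy2, hym2,
    hpy, hmy, hp3, hm3, h3p, h3m⟩ := goodpt_facts hg
  unfold N2 NR S2
  rcases lt_or_gt_of_ne hx0 with hx | hx
  · -- x < 0 : second branch
    rw [abs_of_neg hx]
    constructor
    · rintro ⟨⟨u1, u2, u3⟩, u5⟩
      right
      have hya : |y| < 1 := by
        rcases abs_nonneg y |>.lt_or_eq with h | h
        · nlinarith [abs_nonneg y]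
        · nlinarith [abs_nonneg y]
      have hxge : 1 ≤ -x := by
        rcases u3 with h | h; exact h; exfalso; linarith
      refine ⟨lt_of_le_of_ne hxge ?_, lt_of_le_of_ne u1 ?_, ?_, ?_⟩
      · intro h; exact hxm1 (by linarith)
      · intro h; exact hxm2 (by linarith)
      · rcases (show x ≤ -(3*y) by cases abs_cases y <;> nlinarith).lt_or_eq with h | h
        · linarith
        · exact absurd (by linarith : x + 3*y = 0) hp3
      · rcases (show -(3*y) ≤ -x by cases abs_cases y <;> nlinarith).lt_or_eq with h | h
        · linarith
        · exact absurd (by linarith : x - 3*y = 0) hm3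
    · rintro (⟨h1, h2, h3, h4⟩ | ⟨h1, h2, h3, h4⟩)
      · exfalso; linarith
      · refine ⟨⟨by linarith, ?_, Or.inl (by linarith)⟩, ?_⟩ <;> cases abs_cases y <;> linarith
  · -- x > 0 : first branch
    rw [abs_of_pos hx]
    constructor
    · rintro ⟨⟨u1, u2, u3⟩, u5⟩
      left
      have hxge : 1 ≤ x := by
        rcases u3 with h | h; exact h; exfalso; nlinarith [abs_nonneg y]
      refine ⟨lt_of_le_of_ne hxge (Ne.symm hx1), lt_of_le_of_ne u1 hx2, ?_, ?_⟩
      · rcases (show -x ≤ 3*y by cases abs_cases y <;> nlinarith).lt_or_eq with h | h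
        · linarith
        · exact absurd (by linarith : x + 3*y = 0) hp3
      · rcases (show 3*y ≤ x by cases abs_cases y <;> nlinarith).lt_or_eq with h | h
        · linarith
        · exact absurd (by linarith : x - 3*y = 0) hm3
    · rintro (⟨h1, h2, h3, h4⟩ | ⟨h1, h2, h3, h4⟩)
      · refine ⟨⟨by linarith, ?_, Or.inl (by linarith)⟩, ?_⟩ <;> cases abs_cases y <;> linarith
      · exfalso; linarith

lemma n3_iff (hg : GoodPt x y) : N3 x y ↔ S1 x (-y) ∨ S1 (-x) y := by
  have hg' : GoodPt x (-y) := goodpt_neg hg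
  have h := n1_iff hg'
  have e : N3 x y ↔ N1 x (-y) := by
    unfold N1 N3 NR
    rw [abs_neg, mul_neg, neg_nonpos]
  rw [e, h, neg_neg]

section exun
variable {a b : ℝ}

/-- Existence for the pair `C̄₂` on the fundamental square. -/
lemma s2_exists (hg : GoodPt a b) (ha0 : 0 < a) (ha2 : a < 2) (hb0 : 0 < b) (hb2 : b < 2) :
    ∃ p q : ℤ, (p + q) % 2 = 0 ∧
      (S2 (a - p) (b - q) ∨ S2 ((p : ℝ) - a) ((q : ℝ) - b)) := by
  have ha1 : a ≠ 1 := by have := (hg 1).1; simpa using this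
  have hc2 : a + 3*b ≠ 2 := by have := (hg 2).2.2.2.2.1; simpa using this
  have hc4 : a - 3*b ≠ -4 := by have := (hg (-4)).2.2.2.2.2.1; push_cast at this; simpa using this
  have hc0 : a - 3*b ≠ 0 := by have := (hg 0).2.2.2.2.2.1; simpa using this
  have hc6 : a + 3*b ≠ 6 := by have := (hg 6).2.2.2.2.1; simpa using this
  rcases lt_or_gt_of_ne ha1 with ha | ha
  · rcases lt_or_gt_of_ne hc2 with h2 | h2
    · exact ⟨2, 0, by norm_num, Or.inr (by unfold S2; push_cast; refine ⟨?_, ?_, ?_, ?_⟩ <;> linarith)⟩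
    · rcases lt_or_gt_of_ne hc4 with h4 | h4
      · exact ⟨2, 2, by norm_num, Or.inr (by unfold S2; push_cast; refine ⟨?_, ?_, ?_, ?_⟩ <;> linarith)⟩
      · exact ⟨-1, 1, by norm_num, Or.inl (by unfold S2; push_cast; refine ⟨?_, ?_, ?_, ?_⟩ <;> linarith)⟩
  · rcases lt_or_gt_of_ne hc0 with h0 | h0
    · rcases lt_or_gt_of_ne hc6 with h6 | h6
      · exact ⟨3, 1, by norm_num, Or.inr (by unfold S2; push_cast; refine ⟨?_, ?_, ?_, ?_⟩ <;> linarith)⟩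
      · exact ⟨0, 2, by norm_num, Or.inl (by unfold S2; push_cast; refine ⟨?_, ?_, ?_, ?_⟩ <;> linarith)⟩
    · exact ⟨0, 0, by norm_num, Or.inl (by unfold S2; push_cast; refine ⟨?_, ?_, ?_, ?_⟩ <;> linarith)⟩

/-- Existence for the pair `C̄₁` on the fundamental square. -/
lemma s1_exists (hg : GoodPt a b) (ha0 : 0 < a) (ha2 : a < 2) (hb0 : 0 < b) (hb2 : b < 2) :
    ∃ p q : ℤ, (p + q) % 2 = 0 ∧
      (S1 (a - p) (b - q) ∨ S1 ((p : ℝ) - a) ((q : ℝ) - b)) := by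
  have ha1 : a ≠ 1 := by have := (hg 1).1; simpa using this
  have hc2 : a + 3*b ≠ 2 := by have := (hg 2).2.2.2.2.1; simpa using this
  have hab2 : a + b ≠ 2 := by have := (hg 2).2.2.1; simpa using this
  have hc6 : a + 3*b ≠ 6 := by have := (hg 6).2.2.2.2.1; simpa using this
  rcases lt_or_gt_of_ne ha1 with ha | ha
  · rcases lt_or_gt_of_ne hc2 with h2 | h2
    · exact ⟨-1, 1, by norm_num, Or.inl (by unfold S1; push_cast; refine ⟨?_, ?_, ?_, ?_⟩ <;> linarith)⟩
    · rcases lt_or_gt_of_ne hab2 with hab | hab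
      · exact ⟨2, 0, by norm_num, Or.inr (by unfold S1; push_cast; refine ⟨?_, ?_, ?_, ?_⟩ <;> linarith)⟩
      · exact ⟨-1, 3, by norm_num, Or.inl (by unfold S1; push_cast; refine ⟨?_, ?_, ?_, ?_⟩ <;> linarith)⟩
  · rcases lt_or_gt_of_ne hab2 with hab | hab
    · exact ⟨3, -1, by norm_num, Or.inr (by unfold S1; push_cast; refine ⟨?_, ?_, ?_, ?_⟩ <;> linarith)⟩
    · rcases lt_or_gt_of_ne hc6 with h6 | h6
      · exact ⟨0, 2, by norm_num, Or.inl (by unfold S1; push_cast; refine ⟨?_, ?_, ?_, ?_⟩ <;> linarith)⟩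
      · exact ⟨3, 1, by norm_num, Or.inr (by unfold S1; push_cast; refine ⟨?_, ?_, ?_, ?_⟩ <;> linarith)⟩

/-- Packing (at most one) for `C̄₂`. -/
lemma s2_unique {p q p' q' : ℤ} (hpar : (p + q) % 2 = 0) (hpar' : (p' + q') % 2 = 0)
    (h : S2 (a - p) (b - q) ∨ S2 ((p : ℝ) - a) ((q : ℝ) - b))
    (h' : S2 (a - p') (b - q') ∨ S2 ((p' : ℝ) - a) ((q' : ℝ) - b)) :
    p = p' ∧ q = q' := by
  unfold S2 at h h'
  rcases h with ⟨u1, u2, u3, u4⟩ | ⟨u1, u2, u3, u4⟩ <;>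
    rcases h' with ⟨v1, v2, v3, v4⟩ | ⟨v1, v2, v3, v4⟩
  · have hp : p = p' := by
      have l1 : ((p : ℝ) - p') < 1 := by linarith
      have l2 : ((p' : ℝ) - p) < 1 := by linarith
      have l1' : (p : ℤ) - p' < 1 := by exact_mod_cast l1
      have l2' : (p' : ℤ) - p < 1 := by exact_mod_cast l2
      omega
    subst hp
    have l1 : ((q : ℝ) - q') < 2 := by linarith
    have l2 : ((q' : ℝ) - q) < 2 := by linarith
    have l1' : (q : ℤ) - q' < 2 := by exact_mod_cast l1
    have l2' : (q' : ℤ) - q < 2 := by exact_mod_cast l2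
    constructor
    · rfl
    · omega
  · exfalso
    have l1 : (2 : ℝ) < (p' : ℝ) - p := by linarith
    have l2 : ((p' : ℝ) - p) < 4 := by linarith
    have l1' : (2 : ℤ) < p' - p := by exact_mod_cast l1
    have l2' : (p' : ℤ) - p < 4 := by exact_mod_cast l2
    have hp3 : p' = p + 3 := by omega
    have hp3r : ((p' : ℤ) : ℝ) = (p : ℝ) + 3 := by exact_mod_cast hp3
    have l3 : 3*((q' : ℝ) - q) < 3 := by linarith
    have l4 : -3 < 3*((q' : ℝ) - q) := by linarith
    have l3' : 3*((q' : ℤ) - q) < 3 := by exact_mod_cast l3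
    have l4' : (-3 : ℤ) < 3*((q' : ℤ) - q) := by exact_mod_cast l4
    omega
  · exfalso
    have l1 : (2 : ℝ) < (p : ℝ) - p' := by linarith
    have l2 : ((p : ℝ) - p') < 4 := by linarith
    have l1' : (2 : ℤ) < p - p' := by exact_mod_cast l1
    have l2' : (p : ℤ) - p' < 4 := by exact_mod_cast l2
    have hp3 : p = p' + 3 := by omega
    have hp3r : ((p : ℤ) : ℝ) = (p' : ℝ) + 3 := by exact_mod_cast hp3
    have l3 : 3*((q : ℝ) - q') < 3 := by linarith
    have l4 : -3 < 3*((q : ℝ) - q') := by linarith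
    have l3' : 3*((q : ℤ) - q') < 3 := by exact_mod_cast l3
    have l4' : (-3 : ℤ) < 3*((q : ℤ) - q') := by exact_mod_cast l4
    omega
  · have hp : p = p' := by
      have l1 : ((p : ℝ) - p') < 1 := by linarith
      have l2 : ((p' : ℝ) - p) < 1 := by linarith
      have l1' : (p : ℤ) - p' < 1 := by exact_mod_cast l1
      have l2' : (p' : ℤ) - p < 1 := by exact_mod_cast l2
      omega
    subst hp
    have l1 : ((q : ℝ) - q') < 2 := by linarith
    have l2 : ((q' : ℝ) - q) < 2 := by linarith
    have l1' : (q : ℤ) - q' < 2 := by exact_mod_cast l1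
    have l2' : (q' : ℤ) - q < 2 := by exact_mod_cast l2
    exact ⟨rfl, by omega⟩

/-- Packing (at most one) for `C̄₁`. -/
lemma s1_unique {p q p' q' : ℤ} (hpar : (p + q) % 2 = 0) (hpar' : (p' + q') % 2 = 0)
    (h : S1 (a - p) (b - q) ∨ S1 ((p : ℝ) - a) ((q : ℝ) - b))
    (h' : S1 (a - p') (b - q') ∨ S1 ((p' : ℝ) - a) ((q' : ℝ) - b)) :
    p = p' ∧ q = q' := by
  unfold S1 at h h'
  rcases h with ⟨u1, u2, u3, u4⟩ | ⟨u1, u2, u3, u4⟩ <;>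
    rcases h' with ⟨v1, v2, v3, v4⟩ | ⟨v1, v2, v3, v4⟩
  · have hp : p = p' := by
      have l1 : ((p : ℝ) - p') < 1 := by linarith
      have l2 : ((p' : ℝ) - p) < 1 := by linarith
      have l1' : (p : ℤ) - p' < 1 := by exact_mod_cast l1
      have l2' : (p' : ℤ) - p < 1 := by exact_mod_cast l2
      omega
    subst hp
    have l1 : ((q : ℝ) - q') < 2 := by linarith
    have l2 : ((q' : ℝ) - q) < 2 := by linarith
    have l1' : (q : ℤ) - q' < 2 := by exact_mod_cast l1
    have l2' : (q' : ℤ) - q < 2 := by exact_mod_cast l2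
    exact ⟨rfl, by omega⟩
  · exfalso
    have l1 : (2 : ℝ) < (p' : ℝ) - p := by linarith
    have l2 : ((p' : ℝ) - p) < 4 := by linarith
    have l1' : (2 : ℤ) < p' - p := by exact_mod_cast l1
    have l2' : (p' : ℤ) - p < 4 := by exact_mod_cast l2
    have hp3 : p' = p + 3 := by omega
    have hp3r : ((p' : ℤ) : ℝ) = (p : ℝ) + 3 := by exact_mod_cast hp3
    -- q' - q ∈ (-3, -1) hence = -2, contradicting parity
    have l3 : ((q' : ℝ) - q) > -3 := by linarith
    have l4 : 3*((q' : ℝ) - q) < -3 := by linarith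
    have l3' : (-3 : ℤ) < q' - q := by exact_mod_cast l3
    have l4' : (q' : ℤ) - q < -1 := by
      have : 3*((q' : ℤ) - q) < -3 := by exact_mod_cast l4
      omega
    omega
  · exfalso
    have l1 : (2 : ℝ) < (p : ℝ) - p' := by linarith
    have l2 : ((p : ℝ) - p') < 4 := by linarith
    have l1' : (2 : ℤ) < p - p' := by exact_mod_cast l1
    have l2' : (p : ℤ) - p' < 4 := by exact_mod_cast l2
    have hp3 : p = p' + 3 := by omega
    have hp3r : ((p : ℤ) : ℝ) = (p' : ℝ) + 3 := by exact_mod_cast hp3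
    have l3 : ((q : ℝ) - q') > -3 := by linarith
    have l4 : 3*((q : ℝ) - q') < -3 := by linarith
    have l3' : (-3 : ℤ) < q - q' := by exact_mod_cast l3
    have l4' : (q : ℤ) - q' < -1 := by
      have : 3*((q : ℤ) - q') < -3 := by exact_mod_cast l4
      omega
    omega
  · have hp : p = p' := by
      have l1 : ((p : ℝ) - p') < 1 := by linarith
      have l2 : ((p' : ℝ) - p) < 1 := by linarith
      have l1' : (p : ℤ) - p' < 1 := by exact_mod_cast l1
      have l2' : (p' : ℤ) - p < 1 := by exact_mod_cast l2
      omega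
    subst hp
    have l1 : ((q : ℝ) - q') < 2 := by linarith
    have l2 : ((q' : ℝ) - q) < 2 := by linarith
    have l1' : (q : ℤ) - q' < 2 := by exact_mod_cast l1
    have l2' : (q' : ℤ) - q < 2 := by exact_mod_cast l2
    exact ⟨rfl, by omega⟩

/-- Two-sided strict form. -/
def SS (S : ℝ → ℝ → Prop) (a b : ℝ) (p q : ℤ) : Prop :=
  S (a - p) (b - q) ∨ S ((p : ℝ) - a) ((q : ℝ) - b)

lemma nn1 (hg : GoodPt a b) (p q : ℤ) : N1 (a - p) (b - q) ↔ SS S1 a b p q := by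
  have := n1_iff (goodpt_shift hg p q)
  rwa [show -(a - (p:ℝ)) = (p:ℝ) - a from by ring,
    show -(b - (q:ℝ)) = (q:ℝ) - b from by ring] at this

lemma nn2 (hg : GoodPt a b) (p q : ℤ) : N2 (a - p) (b - q) ↔ SS S2 a b p q := by
  have := n2_iff (goodpt_shift hg p q)
  rwa [show -(a - (p:ℝ)) = (p:ℝ) - a from by ring,
    show -(b - (q:ℝ)) = (q:ℝ) - b from by ring] at this

lemma exu1 (hg : GoodPt a b) :
    ∃! pq : ℤ × ℤ, (pq.1 + pq.2) % 2 = 0 ∧ N1 (a - pq.1) (b - pq.2) := by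
  set m : ℤ := 2*⌊a/2⌋ with hm
  set n : ℤ := 2*⌊b/2⌋ with hn
  have hg' : GoodPt (a - m) (b - n) := goodpt_shift hg m n
  have ham : 0 ≤ a - m ∧ a - m < 2 := by
    constructor
    · have := Int.floor_le (a/2); push_cast [hm]; linarith
    · have := Int.lt_floor_add_one (a/2); push_cast [hm]; linarith
  have hbn : 0 ≤ b - n ∧ b - n < 2 := by
    constructor
    · have := Int.floor_le (b/2); push_cast [hn]; linarith
    · have := Int.lt_floor_add_one (b/2); push_cast [hn]; linarith
  have ha0 : 0 < a - m := lt_of_le_of_ne ham.1 (Ne.symm (by simpa using (hg' 0).1))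
  have hb0 : 0 < b - n := lt_of_le_of_ne hbn.1 (Ne.symm (by simpa using (hg' 0).2.1))
  obtain ⟨p, q, hpar, hS⟩ := s1_exists hg' ha0 ham.2 hb0 hbn.2
  have key : ∀ u v : ℤ, ((a - m) - (u : ℝ) = a - ((u + m : ℤ) : ℝ))
      ∧ ((u : ℝ) - (a - m) = ((u + m : ℤ) : ℝ) - a) := by
    intro u v; constructor <;> push_cast <;> ring
  have hSS : SS S1 a b (p + m) (q + n) := by
    unfold SS
    rw [show a - ((p + m : ℤ) : ℝ) = (a - m) - p from by push_cast; ring,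
      show b - ((q + n : ℤ) : ℝ) = (b - n) - q from by push_cast; ring,
      show ((p + m : ℤ) : ℝ) - a = (p : ℝ) - (a - m) from by push_cast; ring,
      show ((q + n : ℤ) : ℝ) - b = (q : ℝ) - (b - n) from by push_cast; ring]
    exact hS
  refine ⟨(p + m, q + n), ⟨by omega, (nn1 hg _ _).mpr hSS⟩, ?_⟩
  rintro ⟨u, v⟩ ⟨hp2, hN⟩
  have hSS' : SS S1 a b u v := (nn1 hg u v).mp hN
  have := s1_unique (a := a) (b := b) hp2 (by omega : ((p+m) + (q+n)) % 2 = 0) hSS' hSS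
  simp only [Prod.mk.injEq]
  exact this

lemma exu2 (hg : GoodPt a b) :
    ∃! pq : ℤ × ℤ, (pq.1 + pq.2) % 2 = 0 ∧ N2 (a - pq.1) (b - pq.2) := by
  set m : ℤ := 2*⌊a/2⌋ with hm
  set n : ℤ := 2*⌊b/2⌋ with hn
  have hg' : GoodPt (a - m) (b - n) := goodpt_shift hg m n
  have ham : 0 ≤ a - m ∧ a - m < 2 := by
    constructor
    · have := Int.floor_le (a/2); push_cast [hm]; linarith
    · have := Int.lt_floor_add_one (a/2); push_cast [hm]; linarith
  have hbn : 0 ≤ b - n ∧ b - n < 2 := by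
    constructor
    · have := Int.floor_le (b/2); push_cast [hn]; linarith
    · have := Int.lt_floor_add_one (b/2); push_cast [hn]; linarith
  have ha0 : 0 < a - m := lt_of_le_of_ne ham.1 (Ne.symm (by simpa using (hg' 0).1))
  have hb0 : 0 < b - n := lt_of_le_of_ne hbn.1 (Ne.symm (by simpa using (hg' 0).2.1))
  obtain ⟨p, q, hpar, hS⟩ := s2_exists hg' ha0 ham.2 hb0 hbn.2
  have hSS : SS S2 a b (p + m) (q + n) := by
    unfold SS
    rw [show a - ((p + m : ℤ) : ℝ) = (a - m) - p from by push_cast; ring,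
      show b - ((q + n : ℤ) : ℝ) = (b - n) - q from by push_cast; ring,
      show ((p + m : ℤ) : ℝ) - a = (p : ℝ) - (a - m) from by push_cast; ring,
      show ((q + n : ℤ) : ℝ) - b = (q : ℝ) - (b - n) from by push_cast; ring]
    exact hS
  refine ⟨(p + m, q + n), ⟨by omega, (nn2 hg _ _).mpr hSS⟩, ?_⟩
  rintro ⟨u, v⟩ ⟨hp2, hN⟩
  have hSS' : SS S2 a b u v := (nn2 hg u v).mp hN
  have := s2_unique (a := a) (b := b) hp2 (by omega : ((p+m) + (q+n)) % 2 = 0) hSS' hSS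
  simp only [Prod.mk.injEq]
  exact this

lemma exu3 (hg : GoodPt a b) :
    ∃! pq : ℤ × ℤ, (pq.1 + pq.2) % 2 = 0 ∧ N3 (a - pq.1) (b - pq.2) := by
  obtain ⟨⟨p, q⟩, ⟨hpar, hN⟩, hu⟩ := exu1 (goodpt_neg hg)
  have conv : ∀ u v : ℤ, N3 (a - u) (b - v) ↔ N1 (a - u) (-b - ((-v : ℤ) : ℝ)) := by
    intro u v
    rw [show (-b - ((-v : ℤ) : ℝ)) = -(b - v) from by push_cast; ring]
    unfold N1 N3 NR
    rw [abs_neg, mul_neg, neg_nonpos]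
  refine ⟨(p, -q), ⟨by omega, ?_⟩, ?_⟩
  · rw [conv]
    simpa using hN
  · rintro ⟨u, v⟩ ⟨hp2, hN2⟩
    have := hu (u, -v) ⟨by omega, by simpa using (conv u v).mp hN2⟩
    simp only [Prod.mk.injEq] at this ⊢
    exact ⟨this.1, by omega⟩

lemma exu4 (hg : GoodPt a b) :
    ∃! pq : ℤ × ℤ, (pq.1 + pq.2) % 2 = 0 ∧ N1 (b - pq.2) (a - pq.1) := by
  obtain ⟨⟨p, q⟩, ⟨hpar, hN⟩, hu⟩ := exu1 (goodpt_swap hg)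
  refine ⟨(q, p), ⟨by omega, hN⟩, ?_⟩
  rintro ⟨u, v⟩ ⟨hp2, hN2⟩
  have := hu (v, u) ⟨by omega, hN2⟩
  simp only [Prod.mk.injEq] at this ⊢
  exact ⟨this.2, this.1⟩

lemma exu5 (hg : GoodPt a b) :
    ∃! pq : ℤ × ℤ, (pq.1 + pq.2) % 2 = 0 ∧ N2 (b - pq.2) (a - pq.1) := by
  obtain ⟨⟨p, q⟩, ⟨hpar, hN⟩, hu⟩ := exu2 (goodpt_swap hg)
  refine ⟨(q, p), ⟨by omega, hN⟩, ?_⟩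
  rintro ⟨u, v⟩ ⟨hp2, hN2⟩
  have := hu (v, u) ⟨by omega, hN2⟩
  simp only [Prod.mk.injEq] at this ⊢
  exact ⟨this.2, this.1⟩

lemma exu6 (hg : GoodPt a b) :
    ∃! pq : ℤ × ℤ, (pq.1 + pq.2) % 2 = 0 ∧ N3 (b - pq.2) (a - pq.1) := by
  obtain ⟨⟨p, q⟩, ⟨hpar, hN⟩, hu⟩ := exu3 (goodpt_swap hg)
  refine ⟨(q, p), ⟨by omega, hN⟩, ?_⟩
  rintro ⟨u, v⟩ ⟨hp2, hN2⟩
  have := hu (v, u) ⟨by omega, hN2⟩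
  simp only [Prod.mk.injEq] at this ⊢
  exact ⟨this.2, this.1⟩

/-- One-dimensional tiling for the square tile. -/
lemma one_dim {a : ℝ} (h : ∀ k : ℤ, a ≠ k) : ∃! p : ℤ, p % 2 = 0 ∧ |a - p| ≤ 1 := by
  refine ⟨2*⌊(a+1)/2⌋, ⟨by omega, ?_⟩, ?_⟩
  · have h1 := Int.floor_le ((a+1)/2)
    have h2 := Int.lt_floor_add_one ((a+1)/2)
    rw [abs_le]; push_cast; constructor <;> linarith
  · rintro p' ⟨hp2, hp⟩
    have h1 := Int.floor_le ((a+1)/2)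
    have h2 := Int.lt_floor_add_one ((a+1)/2)
    rw [abs_le] at hp
    set p : ℤ := 2*⌊(a+1)/2⌋ with hpdef
    have hpa : a - p ≤ 1 ∧ -1 ≤ a - p := by push_cast [hpdef]; constructor <;> linarith
    have hclose : ((p' : ℝ) - p) < 3 ∧ ((p : ℝ) - p') < 2 + 1 := by constructor <;> linarith
    have c1 : (p' : ℤ) - p < 3 := by exact_mod_cast hclose.1
    have c2 : (p : ℤ) - p' < 3 := by exact_mod_cast hclose.2
    have hd : p' = p ∨ p' = p + 2 ∨ p' = p - 2 := by omega
    rcases hd with rfl | rfl | rfl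
    · rfl
    · exfalso
      have : a = (p : ℝ) + 1 := by push_cast at hp ⊢; linarith
      exact h (p + 1) (by push_cast; linarith)
    · exfalso
      have : a = (p : ℝ) - 1 := by push_cast at hp ⊢; linarith
      exact h (p - 1) (by push_cast; linarith)

def N0 (x y : ℝ) : Prop := |x| ≤ 1 ∧ |y| ≤ 1

lemma exu0 (hg : GoodPt a b) :
    ∃! pq : ℤ × ℤ, (pq.1 % 2 = 0 ∧ pq.2 % 2 = 0) ∧ N0 (a - pq.1) (b - pq.2) := by
  obtain ⟨p, ⟨hp2, hpa⟩, hpu⟩ := one_dim (fun k => (hg k).1)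
  obtain ⟨q, ⟨hq2, hqb⟩, hqu⟩ := one_dim (fun k => (hg k).2.1)
  refine ⟨(p, q), ⟨⟨hp2, hq2⟩, hpa, hqb⟩, ?_⟩
  rintro ⟨u, v⟩ ⟨⟨hu2, hv2⟩, hNu, hNv⟩
  have := hpu u ⟨hu2, hNu⟩
  have := hqu v ⟨hv2, hNv⟩
  simp only [Prod.mk.injEq]
  omega


end exun
end strictify

def lineCoef : Fin 8 → ℚ × ℚ :=
  ![(2,0),(0,2),(2,2),(2,-2),(2,6),(2,-6),(6,2),(6,-2)]

lemma null_bad : volume {ξ : Fin 2 → ℝ | ¬ GoodPt (2 * ξ 0 / π) (2 * ξ 1 / π)} = 0 := by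
  have hsub : {ξ : Fin 2 → ℝ | ¬ GoodPt (2 * ξ 0 / π) (2 * ξ 1 / π)} ⊆
      ⋃ (k : ℤ), ⋃ (i : Fin 8),
        {ξ : Fin 2 → ℝ | ((lineCoef i).1 : ℝ) * ξ 0 + ((lineCoef i).2 : ℝ) * ξ 1 = k * π} := by
    intro ξ hξ
    simp only [Set.mem_setOf_eq, GoodPt, not_forall] at hξ
    obtain ⟨k, hk⟩ := hξ
    have hπ : (π : ℝ) ≠ 0 := Real.pi_ne_zero
    simp only [Set.mem_iUnion]
    rw [not_and_or, not_and_or, not_and_or, not_and_or, not_and_or, not_and_or, not_and_or] at hk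
    simp only [ne_eq, not_not] at hk
    rcases hk with h|h|h|h|h|h|h|h
    · exact ⟨k, 0, by simp only [Set.mem_setOf_eq, show lineCoef 0 = (2,0) from rfl]; field_simp at h ⊢; push_cast; linarith⟩
    · exact ⟨k, 1, by simp only [Set.mem_setOf_eq, show lineCoef 1 = (0,2) from rfl]; field_simp at h ⊢; push_cast; linarith⟩
    · exact ⟨k, 2, by simp only [Set.mem_setOf_eq, show lineCoef 2 = (2,2) from rfl]; field_simp at h ⊢; push_cast; linarith⟩
    · exact ⟨k, 3, by simp only [Set.mem_setOf_eq, show lineCoef 3 = (2,-2) from rfl]; field_simp at h ⊢; push_cast; linarith⟩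
    · exact ⟨k, 4, by simp only [Set.mem_setOf_eq, show lineCoef 4 = (2,6) from rfl]; field_simp at h ⊢; push_cast; linarith⟩
    · exact ⟨k, 5, by simp only [Set.mem_setOf_eq, show lineCoef 5 = (2,-6) from rfl]; field_simp at h ⊢; push_cast; linarith⟩
    · exact ⟨k, 6, by simp only [Set.mem_setOf_eq, show lineCoef 6 = (6,2) from rfl]; field_simp at h ⊢; push_cast; linarith⟩
    · exact ⟨k, 7, by simp only [Set.mem_setOf_eq, show lineCoef 7 = (6,-2) from rfl]; field_simp at h ⊢; push_cast; linarith⟩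
  refine measure_mono_null hsub (measure_iUnion_null fun k => measure_iUnion_null fun i => ?_)
  apply null_line
  have hnz : (lineCoef i).1 ≠ 0 ∨ (lineCoef i).2 ≠ 0 := by
    revert i; decide
  rcases hnz with hz | hz
  · exact Or.inl (by exact_mod_cast fun h => hz (by exact_mod_cast h))
  · exact Or.inr (by exact_mod_cast fun h => hz (by exact_mod_cast h))




lemma count_key (P : ℝ → ℝ → Prop) (Par : ℤ → ℤ → Prop)
    (hshift : ∀ (c d k0 k1 : ℤ), Par c d → Par (c + 4*k0) (d + 4*k1))
    {a b : ℝ} {p q : ℤ}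
    (hex : Par p q ∧ P (a - p) (b - q))
    (huni : ∀ pq : ℤ × ℤ, Par pq.1 pq.2 ∧ P (a - pq.1) (b - pq.2) → pq = (p, q))
    (c d : ℤ) (hcd : Par c d) :
    (∃ k : Fin 2 → ℤ, P (a - ((c : ℝ) + 4 * (k 0 : ℝ))) (b - ((d : ℝ) + 4 * (k 1 : ℝ))))
      ↔ (p % 4 = c % 4 ∧ q % 4 = d % 4) := by
  constructor
  · rintro ⟨k, hk⟩
    have h := huni (c + 4*k 0, d + 4*k 1)
      ⟨hshift _ _ _ _ hcd, by
        rw [show ((c + 4*k 0 : ℤ) : ℝ) = (c : ℝ) + 4 * (k 0 : ℝ) from by push_cast; ring,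
          show ((d + 4*k 1 : ℤ) : ℝ) = (d : ℝ) + 4 * (k 1 : ℝ) from by push_cast; ring]
        exact hk⟩
    simp only [Prod.mk.injEq] at h
    omega
  · rintro ⟨h1, h2⟩
    refine ⟨![(p - c)/4, (q - d)/4], ?_⟩
    have e1 : c + 4*((p - c)/4) = p := by omega
    have e2 : d + 4*((q - d)/4) = q := by omega
    rw [show (![(p - c)/4, (q - d)/4] : Fin 2 → ℤ) 0 = (p - c)/4 from rfl,
      show (![(p - c)/4, (q - d)/4] : Fin 2 → ℤ) 1 = (q - d)/4 from rfl,
      show (c : ℝ) + 4 * (((p - c)/4 : ℤ) : ℝ) = ((c + 4*((p - c)/4) : ℤ) : ℝ) from by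
        push_cast; ring,
      show (d : ℝ) + 4 * (((q - d)/4 : ℤ) : ℝ) = ((d + 4*((q - d)/4) : ℤ) : ℝ) from by
        push_cast; ring, e1, e2]
    exact hex.2

lemma mem_periodize_iff (T : Set (Fin 2 → ℝ)) (P : ℝ → ℝ → Prop)
    (hT : ∀ η : Fin 2 → ℝ, η ∈ T ↔ P (2 * η 0 / π) (2 * η 1 / π))
    (ξ : Fin 2 → ℝ) (lm : Fin 2 → ℝ) (c d : ℤ)
    (hc : lm 0 = (c : ℝ) * (π/2)) (hd : lm 1 = (d : ℝ) * (π/2)) :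
    ((ξ - lm) ∈ periodize T ↔ ∃ k : Fin 2 → ℤ,
      P (2*ξ 0/π - ((c : ℝ) + 4*(k 0 : ℝ))) (2*ξ 1/π - ((d : ℝ) + 4*(k 1 : ℝ)))) := by
  unfold periodize
  simp only [Set.mem_setOf_eq]
  refine exists_congr fun k => ?_
  rw [hT]
  have hπ : (π : ℝ) ≠ 0 := Real.pi_ne_zero
  have e0 : 2 * ((ξ - lm - fun i => 2*π*(k i : ℝ)) 0) / π
      = 2*ξ 0/π - ((c : ℝ) + 4*(k 0 : ℝ)) := by
    simp only [Pi.sub_apply]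
    rw [hc]
    field_simp
    ring
  have e1 : 2 * ((ξ - lm - fun i => 2*π*(k i : ℝ)) 1) / π
      = 2*ξ 1/π - ((d : ℝ) + 4*(k 1 : ℝ)) := by
    simp only [Pi.sub_apply]
    rw [hd]
    field_simp
    ring
  rw [e0, e1]

lemma sum_eight (T : Set (Fin 2 → ℝ)) (P : ℝ → ℝ → Prop)
    (hT : ∀ η : Fin 2 → ℝ, η ∈ T ↔ P (2 * η 0 / π) (2 * η 1 / π))
    (ξ : Fin 2 → ℝ)
    (hEU : ∃! pq : ℤ × ℤ, (pq.1 + pq.2) % 2 = 0 ∧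
      P (2*ξ 0/π - pq.1) (2*ξ 1/π - pq.2))
    (lam : Fin 8 → (Fin 2 → ℝ))
    (hlam : lam = ![![π/2, π/2], ![3*π/2, π/2], ![π/2, 3*π/2], ![3*π/2, 3*π/2],
      ![0, 0], ![0, π], ![π, 0], ![π, π]]) :
    ∑ m : Fin 8, Set.indicator (periodize T) (fun _ => (1 : ℝ)) (ξ - lam m) = 1 := by
  obtain ⟨⟨p, q⟩, ⟨hpar, hP⟩, huni⟩ := hEU
  have key := count_key P (fun u v => (u + v) % 2 = 0) (fun c d k0 k1 h => by omega)
    ⟨hpar, hP⟩ huni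
  have comp : ∀ (m : Fin 8) (i : Fin 2) (c : ℤ),
      (![![π/2, π/2], ![3*π/2, π/2], ![π/2, 3*π/2], ![3*π/2, 3*π/2],
        ![0, 0], ![0, π], ![π, 0], ![π, π]] : Fin 8 → Fin 2 → ℝ) m i = (c:ℝ) * (π/2) →
      lam m i = (c:ℝ) * (π/2) := by
    intro m i c h; rw [hlam]; exact h
  have e0 : (ξ - lam 0) ∈ periodize T ↔ (p % 4 = 1 ∧ q % 4 = 1) :=
    (mem_periodize_iff T P hT ξ _ 1 1
      (comp 0 0 1 (by show π/2 = _; push_cast; ring))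
      (comp 0 1 1 (by show π/2 = _; push_cast; ring))).trans
      ((key 1 1 (by norm_num)).trans (by norm_num))
  have e1 : (ξ - lam 1) ∈ periodize T ↔ (p % 4 = 3 ∧ q % 4 = 1) :=
    (mem_periodize_iff T P hT ξ _ 3 1
      (comp 1 0 3 (by show 3*π/2 = _; push_cast; ring))
      (comp 1 1 1 (by show π/2 = _; push_cast; ring))).trans
      ((key 3 1 (by norm_num)).trans (by norm_num))
  have e2 : (ξ - lam 2) ∈ periodize T ↔ (p % 4 = 1 ∧ q % 4 = 3) :=
    (mem_periodize_iff T P hT ξ _ 1 3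
      (comp 2 0 1 (by show π/2 = _; push_cast; ring))
      (comp 2 1 3 (by show 3*π/2 = _; push_cast; ring))).trans
      ((key 1 3 (by norm_num)).trans (by norm_num))
  have e3 : (ξ - lam 3) ∈ periodize T ↔ (p % 4 = 3 ∧ q % 4 = 3) :=
    (mem_periodize_iff T P hT ξ _ 3 3
      (comp 3 0 3 (by show 3*π/2 = _; push_cast; ring))
      (comp 3 1 3 (by show 3*π/2 = _; push_cast; ring))).trans
      ((key 3 3 (by norm_num)).trans (by norm_num))
  have e4 : (ξ - lam 4) ∈ periodize T ↔ (p % 4 = 0 ∧ q % 4 = 0) :=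
    (mem_periodize_iff T P hT ξ _ 0 0
      (comp 4 0 0 (by show (0:ℝ) = _; push_cast; ring))
      (comp 4 1 0 (by show (0:ℝ) = _; push_cast; ring))).trans
      ((key 0 0 (by norm_num)).trans (by norm_num))
  have e5 : (ξ - lam 5) ∈ periodize T ↔ (p % 4 = 0 ∧ q % 4 = 2) :=
    (mem_periodize_iff T P hT ξ _ 0 2
      (comp 5 0 0 (by show (0:ℝ) = _; push_cast; ring))
      (comp 5 1 2 (by show π = _; push_cast; ring))).trans
      ((key 0 2 (by norm_num)).trans (by norm_num))
  have e6 : (ξ - lam 6) ∈ periodize T ↔ (p % 4 = 2 ∧ q % 4 = 0) :=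
    (mem_periodize_iff T P hT ξ _ 2 0
      (comp 6 0 2 (by show π = _; push_cast; ring))
      (comp 6 1 0 (by show (0:ℝ) = _; push_cast; ring))).trans
      ((key 2 0 (by norm_num)).trans (by norm_num))
  have e7 : (ξ - lam 7) ∈ periodize T ↔ (p % 4 = 2 ∧ q % 4 = 2) :=
    (mem_periodize_iff T P hT ξ _ 2 2
      (comp 7 0 2 (by show π = _; push_cast; ring))
      (comp 7 1 2 (by show π = _; push_cast; ring))).trans
      ((key 2 2 (by norm_num)).trans (by norm_num))
  classical
  rw [Fin.sum_univ_eight]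
  simp only [Set.indicator_apply, e0, e1, e2, e3, e4, e5, e6, e7]
  have hres : (p % 4 = 0 ∧ q % 4 = 0) ∨ (p % 4 = 0 ∧ q % 4 = 2) ∨ (p % 4 = 2 ∧ q % 4 = 0)
      ∨ (p % 4 = 2 ∧ q % 4 = 2) ∨ (p % 4 = 1 ∧ q % 4 = 1) ∨ (p % 4 = 1 ∧ q % 4 = 3)
      ∨ (p % 4 = 3 ∧ q % 4 = 1) ∨ (p % 4 = 3 ∧ q % 4 = 3) := by omega
  rcases hres with ⟨h1, h2⟩ | ⟨h1, h2⟩ | ⟨h1, h2⟩ | ⟨h1, h2⟩ | ⟨h1, h2⟩ | ⟨h1, h2⟩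
    | ⟨h1, h2⟩ | ⟨h1, h2⟩ <;> rw [h1, h2] <;> norm_num

lemma sum_four (T : Set (Fin 2 → ℝ)) (P : ℝ → ℝ → Prop)
    (hT : ∀ η : Fin 2 → ℝ, η ∈ T ↔ P (2 * η 0 / π) (2 * η 1 / π))
    (ξ : Fin 2 → ℝ)
    (hEU : ∃! pq : ℤ × ℤ, (pq.1 % 2 = 0 ∧ pq.2 % 2 = 0) ∧
      P (2*ξ 0/π - pq.1) (2*ξ 1/π - pq.2))
    (gam : Fin 4 → (Fin 2 → ℝ))
    (hgam : gam = ![![0, 0], ![0, π], ![π, 0], ![π, π]]) :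
    ∑ m : Fin 4, Set.indicator (periodize T) (fun _ => (1 : ℝ)) (ξ - gam m) = 1 := by
  obtain ⟨⟨p, q⟩, ⟨hpar, hP⟩, huni⟩ := hEU
  have key := count_key P (fun u v => u % 2 = 0 ∧ v % 2 = 0)
    (fun c d k0 k1 h => by omega) ⟨hpar, hP⟩ huni
  have comp : ∀ (m : Fin 4) (i : Fin 2) (c : ℤ),
      (![![0, 0], ![0, π], ![π, 0], ![π, π]] : Fin 4 → Fin 2 → ℝ) m i = (c:ℝ) * (π/2) →
      gam m i = (c:ℝ) * (π/2) := by
    intro m i c h; rw [hgam]; exact h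
  have e0 : (ξ - gam 0) ∈ periodize T ↔ (p % 4 = 0 ∧ q % 4 = 0) :=
    (mem_periodize_iff T P hT ξ _ 0 0
      (comp 0 0 0 (by show (0:ℝ) = _; push_cast; ring))
      (comp 0 1 0 (by show (0:ℝ) = _; push_cast; ring))).trans
      ((key 0 0 (by norm_num)).trans (by norm_num))
  have e1 : (ξ - gam 1) ∈ periodize T ↔ (p % 4 = 0 ∧ q % 4 = 2) :=
    (mem_periodize_iff T P hT ξ _ 0 2
      (comp 1 0 0 (by show (0:ℝ) = _; push_cast; ring))
      (comp 1 1 2 (by show π = _; push_cast; ring))).trans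
      ((key 0 2 (by norm_num)).trans (by norm_num))
  have e2 : (ξ - gam 2) ∈ periodize T ↔ (p % 4 = 2 ∧ q % 4 = 0) :=
    (mem_periodize_iff T P hT ξ _ 2 0
      (comp 2 0 2 (by show π = _; push_cast; ring))
      (comp 2 1 0 (by show (0:ℝ) = _; push_cast; ring))).trans
      ((key 2 0 (by norm_num)).trans (by norm_num))
  have e3 : (ξ - gam 3) ∈ periodize T ↔ (p % 4 = 2 ∧ q % 4 = 2) :=
    (mem_periodize_iff T P hT ξ _ 2 2
      (comp 3 0 2 (by show π = _; push_cast; ring))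
      (comp 3 1 2 (by show π = _; push_cast; ring))).trans
      ((key 2 2 (by norm_num)).trans (by norm_num))
  classical
  rw [Fin.sum_univ_four]
  simp only [Set.indicator_apply, e0, e1, e2, e3]
  have hres : (p % 4 = 0 ∧ q % 4 = 0) ∨ (p % 4 = 0 ∧ q % 4 = 2) ∨ (p % 4 = 2 ∧ q % 4 = 0)
      ∨ (p % 4 = 2 ∧ q % 4 = 2) := by omega
  rcases hres with ⟨h1, h2⟩ | ⟨h1, h2⟩ | ⟨h1, h2⟩ | ⟨h1, h2⟩ <;> rw [h1, h2] <;> norm_num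


lemma trap1_mem (η : Fin 2 → ℝ) : η ∈ trapPair 1 ↔ N1 (2 * η 0 / π) (2 * η 1 / π) := by
  have hmem : η ∈ trapPair 1 ↔ ((|η 0| ≤ π ∧ |η 1| ≤ π) ∧ (π/2 ≤ |η 0| ∨ π/2 ≤ |η 1|))
      ∧ (|η 1| ≤ |η 0| ∧ |η 0| ≤ 3*|η 1| ∧ η 0 * η 1 ≤ 0) := Iff.rfl
  rw [hmem]
  have hπ := Real.pi_pos
  have hπ' : (π : ℝ) ≠ 0 := Real.pi_ne_zero
  set a := 2 * η 0 / π with ha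
  set b := 2 * η 1 / π with hb
  have hx : η 0 = a * (π/2) := by rw [ha]; field_simp
  have hy : η 1 = b * (π/2) := by rw [hb]; field_simp
  rw [hx, hy, abs_mul, abs_mul, abs_of_pos (by positivity : (0:ℝ) < π/2)]
  unfold N1 NR
  constructor
  · rintro ⟨⟨⟨u1, u2⟩, u3⟩, u4, u5, u6⟩
    refine ⟨⟨by nlinarith, by nlinarith, ?or⟩, by nlinarith, by nlinarith, ?prod⟩
    case prod =>
      by_contra hcon
      push_neg at hcon
      nlinarith [mul_pos hcon (show (0:ℝ) < (π/2)*(π/2) by positivity)]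
    case or =>
    rcases u3 with h | h
    · exact Or.inl (by nlinarith)
    · exact Or.inr (by nlinarith)
  · rintro ⟨⟨u1, u2, u3⟩, u4, u5, u6⟩
    refine ⟨⟨⟨by nlinarith, by nlinarith⟩, ?_⟩, by nlinarith, by nlinarith,
      by nlinarith [mul_le_mul_of_nonneg_right u6 (show (0:ℝ) ≤ (π/2)*(π/2) by positivity)]⟩
    rcases u3 with h | h
    · exact Or.inl (by nlinarith)
    · exact Or.inr (by nlinarith)

lemma trap0_mem (η : Fin 2 → ℝ) : η ∈ trapPair 0 ↔ N0 (2 * η 0 / π) (2 * η 1 / π) := by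
  have hmem : η ∈ trapPair 0 ↔ (|η 0| ≤ π/2 ∧ |η 1| ≤ π/2) := Iff.rfl
  rw [hmem]
  have hπ := Real.pi_pos
  have hπ' : (π : ℝ) ≠ 0 := Real.pi_ne_zero
  set a := 2 * η 0 / π with ha
  set b := 2 * η 1 / π with hb
  have hx : η 0 = a * (π/2) := by rw [ha]; field_simp
  have hy : η 1 = b * (π/2) := by rw [hb]; field_simp
  rw [hx, hy, abs_mul, abs_mul, abs_of_pos (by positivity : (0:ℝ) < π/2)]
  unfold N0
  constructor
  · rintro ⟨u1, u2⟩; exact ⟨by nlinarith, by nlinarith⟩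
  · rintro ⟨u1, u2⟩; exact ⟨by nlinarith, by nlinarith⟩

lemma trap2_mem (η : Fin 2 → ℝ) : η ∈ trapPair 2 ↔ N2 (2 * η 0 / π) (2 * η 1 / π) := by
  have hmem : η ∈ trapPair 2 ↔ ((|η 0| ≤ π ∧ |η 1| ≤ π) ∧ (π/2 ≤ |η 0| ∨ π/2 ≤ |η 1|))
      ∧ 3*|η 1| ≤ |η 0| := Iff.rfl
  rw [hmem]
  have hπ := Real.pi_pos
  have hπ' : (π : ℝ) ≠ 0 := Real.pi_ne_zero
  set a := 2 * η 0 / π with ha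
  set b := 2 * η 1 / π with hb
  have hx : η 0 = a * (π/2) := by rw [ha]; field_simp
  have hy : η 1 = b * (π/2) := by rw [hb]; field_simp
  rw [hx, hy, abs_mul, abs_mul, abs_of_pos (by positivity : (0:ℝ) < π/2)]
  unfold N2 NR
  constructor
  · rintro ⟨⟨⟨u1, u2⟩, u3⟩, u4⟩
    refine ⟨⟨by nlinarith, by nlinarith, ?_⟩, by nlinarith⟩
    rcases u3 with h | h
    · exact Or.inl (by nlinarith)
    · exact Or.inr (by nlinarith)
  · rintro ⟨⟨u1, u2, u3⟩, u4⟩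
    refine ⟨⟨⟨by nlinarith, by nlinarith⟩, ?_⟩, by nlinarith⟩
    rcases u3 with h | h
    · exact Or.inl (by nlinarith)
    · exact Or.inr (by nlinarith)

lemma trap3_mem (η : Fin 2 → ℝ) : η ∈ trapPair 3 ↔ N3 (2 * η 0 / π) (2 * η 1 / π) := by
  have hmem : η ∈ trapPair 3 ↔ ((|η 0| ≤ π ∧ |η 1| ≤ π) ∧ (π/2 ≤ |η 0| ∨ π/2 ≤ |η 1|))
      ∧ (|η 1| ≤ |η 0| ∧ |η 0| ≤ 3*|η 1| ∧ 0 ≤ η 0 * η 1) := Iff.rfl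
  rw [hmem]
  have hπ := Real.pi_pos
  have hπ' : (π : ℝ) ≠ 0 := Real.pi_ne_zero
  set a := 2 * η 0 / π with ha
  set b := 2 * η 1 / π with hb
  have hx : η 0 = a * (π/2) := by rw [ha]; field_simp
  have hy : η 1 = b * (π/2) := by rw [hb]; field_simp
  rw [hx, hy, abs_mul, abs_mul, abs_of_pos (by positivity : (0:ℝ) < π/2)]
  unfold N3 NR
  constructor
  · rintro ⟨⟨⟨u1, u2⟩, u3⟩, u4, u5, u6⟩
    refine ⟨⟨by nlinarith, by nlinarith, ?or⟩, by nlinarith, by nlinarith, ?prod⟩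
    case prod =>
      by_contra hcon
      push_neg at hcon
      nlinarith [mul_pos (neg_pos.mpr hcon) (show (0:ℝ) < (π/2)*(π/2) by positivity)]
    case or =>
      rcases u3 with h | h
      · exact Or.inl (by nlinarith)
      · exact Or.inr (by nlinarith)
  · rintro ⟨⟨u1, u2, u3⟩, u4, u5, u6⟩
    refine ⟨⟨⟨by nlinarith, by nlinarith⟩, ?_⟩, by nlinarith, by nlinarith,
      by nlinarith [mul_le_mul_of_nonneg_right u6 (show (0:ℝ) ≤ (π/2)*(π/2) by positivity)]⟩
    rcases u3 with h | h
    · exact Or.inl (by nlinarith)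
    · exact Or.inr (by nlinarith)

lemma trap4_mem (η : Fin 2 → ℝ) : η ∈ trapPair 4 ↔ N1 (2 * η 1 / π) (2 * η 0 / π) := by
  have hmem : η ∈ trapPair 4 ↔ ((|η 0| ≤ π ∧ |η 1| ≤ π) ∧ (π/2 ≤ |η 0| ∨ π/2 ≤ |η 1|))
      ∧ (|η 0| ≤ |η 1| ∧ |η 1| ≤ 3*|η 0| ∧ η 0 * η 1 ≤ 0) := Iff.rfl
  rw [hmem]
  have hπ := Real.pi_pos
  have hπ' : (π : ℝ) ≠ 0 := Real.pi_ne_zero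
  set a := 2 * η 0 / π with ha
  set b := 2 * η 1 / π with hb
  have hx : η 0 = a * (π/2) := by rw [ha]; field_simp
  have hy : η 1 = b * (π/2) := by rw [hb]; field_simp
  rw [hx, hy, abs_mul, abs_mul, abs_of_pos (by positivity : (0:ℝ) < π/2)]
  unfold N1 NR
  constructor
  · rintro ⟨⟨⟨u1, u2⟩, u3⟩, u4, u5, u6⟩
    refine ⟨⟨by nlinarith, by nlinarith, ?or⟩, by nlinarith, by nlinarith, ?prod⟩
    case prod =>
      by_contra hcon
      push_neg at hcon
      nlinarith [mul_pos hcon (show (0:ℝ) < (π/2)*(π/2) by positivity)]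
    case or =>
      rcases u3 with h | h
      · exact Or.inr (by nlinarith)
      · exact Or.inl (by nlinarith)
  · rintro ⟨⟨u1, u2, u3⟩, u4, u5, u6⟩
    refine ⟨⟨⟨by nlinarith, by nlinarith⟩, ?_⟩, by nlinarith, by nlinarith,
      by nlinarith [mul_le_mul_of_nonneg_right u6 (show (0:ℝ) ≤ (π/2)*(π/2) by positivity)]⟩
    rcases u3 with h | h
    · exact Or.inr (by nlinarith)
    · exact Or.inl (by nlinarith)

lemma trap5_mem (η : Fin 2 → ℝ) : η ∈ trapPair 5 ↔ N2 (2 * η 1 / π) (2 * η 0 / π) := by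
  have hmem : η ∈ trapPair 5 ↔ ((|η 0| ≤ π ∧ |η 1| ≤ π) ∧ (π/2 ≤ |η 0| ∨ π/2 ≤ |η 1|))
      ∧ 3*|η 0| ≤ |η 1| := Iff.rfl
  rw [hmem]
  have hπ := Real.pi_pos
  have hπ' : (π : ℝ) ≠ 0 := Real.pi_ne_zero
  set a := 2 * η 0 / π with ha
  set b := 2 * η 1 / π with hb
  have hx : η 0 = a * (π/2) := by rw [ha]; field_simp
  have hy : η 1 = b * (π/2) := by rw [hb]; field_simp
  rw [hx, hy, abs_mul, abs_mul, abs_of_pos (by positivity : (0:ℝ) < π/2)]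
  unfold N2 NR
  constructor
  · rintro ⟨⟨⟨u1, u2⟩, u3⟩, u4⟩
    refine ⟨⟨by nlinarith, by nlinarith, ?_⟩, by nlinarith⟩
    rcases u3 with h | h
    · exact Or.inr (by nlinarith)
    · exact Or.inl (by nlinarith)
  · rintro ⟨⟨u1, u2, u3⟩, u4⟩
    refine ⟨⟨⟨by nlinarith, by nlinarith⟩, ?_⟩, by nlinarith⟩
    rcases u3 with h | h
    · exact Or.inr (by nlinarith)
    · exact Or.inl (by nlinarith)

lemma trap6_mem (η : Fin 2 → ℝ) : η ∈ trapPair 6 ↔ N3 (2 * η 1 / π) (2 * η 0 / π) := by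
  have hmem : η ∈ trapPair 6 ↔ ((|η 0| ≤ π ∧ |η 1| ≤ π) ∧ (π/2 ≤ |η 0| ∨ π/2 ≤ |η 1|))
      ∧ (|η 0| ≤ |η 1| ∧ |η 1| ≤ 3*|η 0| ∧ 0 ≤ η 0 * η 1) := Iff.rfl
  rw [hmem]
  have hπ := Real.pi_pos
  have hπ' : (π : ℝ) ≠ 0 := Real.pi_ne_zero
  set a := 2 * η 0 / π with ha
  set b := 2 * η 1 / π with hb
  have hx : η 0 = a * (π/2) := by rw [ha]; field_simp
  have hy : η 1 = b * (π/2) := by rw [hb]; field_simp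
  rw [hx, hy, abs_mul, abs_mul, abs_of_pos (by positivity : (0:ℝ) < π/2)]
  unfold N3 NR
  constructor
  · rintro ⟨⟨⟨u1, u2⟩, u3⟩, u4, u5, u6⟩
    refine ⟨⟨by nlinarith, by nlinarith, ?or⟩, by nlinarith, by nlinarith, ?prod⟩
    case prod =>
      by_contra hcon
      push_neg at hcon
      nlinarith [mul_pos (neg_pos.mpr hcon) (show (0:ℝ) < (π/2)*(π/2) by positivity)]
    case or =>
      rcases u3 with h | h
      · exact Or.inr (by nlinarith)
      · exact Or.inl (by nlinarith)
  · rintro ⟨⟨u1, u2, u3⟩, u4, u5, u6⟩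
    refine ⟨⟨⟨by nlinarith, by nlinarith⟩, ?_⟩, by nlinarith, by nlinarith,
      by nlinarith [mul_le_mul_of_nonneg_right u6 (show (0:ℝ) ≤ (π/2)*(π/2) by positivity)]⟩
    rcases u3 with h | h
    · exact Or.inr (by nlinarith)
    · exact Or.inl (by nlinarith)


/-- (a) for each `j ∈ {1,…,6}`, the eight `Λ`-translates of `per(C̄_j)`
tile the plane (a.e. exactly one translate contains each point); (b) the four
`Γ`-translates of `per([−π/2,π/2]²)` do likewise. -/
theorem stmt_12
    (lam : Fin 8 → (Fin 2 → ℝ))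
    (hlam : lam = ![![π/2, π/2], ![3*π/2, π/2], ![π/2, 3*π/2], ![3*π/2, 3*π/2],
      ![0, 0], ![0, π], ![π, 0], ![π, π]])
    (gam : Fin 4 → (Fin 2 → ℝ))
    (hgam : gam = ![![0, 0], ![0, π], ![π, 0], ![π, π]]) :
    (∀ j : Fin 6, ∀ᵐ ξ : Fin 2 → ℝ,
      ∑ m : Fin 8, Set.indicator (periodize (trapPair j.succ)) (fun _ => (1 : ℝ))
        (ξ - lam m) = 1) ∧
    (∀ᵐ ξ : Fin 2 → ℝ,
      ∑ m : Fin 4, Set.indicator (periodize (trapPair 0)) (fun _ => (1 : ℝ))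
        (ξ - gam m) = 1) := by
  have hae : ∀ᵐ ξ : Fin 2 → ℝ, GoodPt (2 * ξ 0 / π) (2 * ξ 1 / π) := by
    rw [MeasureTheory.ae_iff]
    exact null_bad
  constructor
  · intro j
    filter_upwards [hae] with ξ hg
    fin_cases j
    · exact sum_eight _ N1 trap1_mem ξ (exu1 hg) lam hlam
    · exact sum_eight _ N2 trap2_mem ξ (exu2 hg) lam hlam
    · exact sum_eight _ N3 trap3_mem ξ (exu3 hg) lam hlam
    · exact sum_eight _ (fun x y => N1 y x) trap4_mem ξ (exu4 hg) lam hlam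
    · exact sum_eight _ (fun x y => N2 y x) trap5_mem ξ (exu5 hg) lam hlam
    · exact sum_eight _ (fun x y => N3 y x) trap6_mem ξ (exu6 hg) lam hlam
  · filter_upwards [hae] with ξ hg
    exact sum_four _ N0 trap0_mem ξ (exu0 hg) gam hgam
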